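/- Let n ≥ 2 and for each m ≥ 2 let C(m) be the number of residues x mod n with x^m ≡ 1 (mod n). If C(m) ≤ 2·m^{ω(n)} for all m, then ∑_{m ≥ 2} (1/m) ∑_{q prime, q < n, q^m ≡ 1 (mod n)} 1/q^m = O(ω(n)/n). -/

import Mathlib

open Finset

/-- Key telescoping inequality: `(a+1)^{-(1+s)} ≤ (1/s)(a^{-s} - (a+1)^{-s})`. -/
private lemma key_ineq {s : ℝ} (hs : 0 < s) {a : ℝ} (ha : 1 ≤ a) :
    (a + 1) ^ (-(1 + s)) ≤ (1 / s) * (a ^ (-s) - (a + 1) ^ (-s)) := by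
  have ha0 : (0:ℝ) < a := by linarith
  have hb0 : (0:ℝ) < a + 1 := by linarith
  have hr0 : (0:ℝ) < (a + 1) / a := by positivity
  have hlog : 1 / (a + 1) ≤ Real.log ((a + 1) / a) := by
    have h := Real.one_sub_inv_le_log_of_pos hr0
    rw [inv_div] at h
    have h3 : 1 - a / (a + 1) = 1 / (a + 1) := by field_simp; ring
    linarith [h3 ▸ h]
  have hexp : 1 + s / (a + 1) ≤ ((a + 1) / a) ^ s := by
    rw [Real.rpow_def_of_pos hr0]
    have h1 : (1 / (a + 1)) * s ≤ Real.log ((a + 1) / a) * s :=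
      mul_le_mul_of_nonneg_right hlog hs.le
    have h2 := Real.add_one_le_exp (Real.log ((a + 1) / a) * s)
    have h4 : (1 / (a + 1)) * s = s / (a + 1) := by ring
    linarith [h4 ▸ h1]
  have hXR : a ^ (-s) = (a + 1) ^ (-s) * ((a + 1) / a) ^ s := by
    rw [Real.div_rpow hb0.le ha0.le, Real.rpow_neg hb0.le, Real.rpow_neg ha0.le]
    have hap : (0:ℝ) < a ^ s := Real.rpow_pos_of_pos ha0 s
    have hbp : (0:ℝ) < (a + 1) ^ s := Real.rpow_pos_of_pos hb0 s
    field_simp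
  have hpos : (0:ℝ) < (a + 1) ^ (-s) := Real.rpow_pos_of_pos hb0 _
  have hdiff : s * (a + 1) ^ (-(1 + s)) ≤ a ^ (-s) - (a + 1) ^ (-s) := by
    have h1 : a ^ (-s) - (a + 1) ^ (-s) = (a + 1) ^ (-s) * (((a + 1) / a) ^ s - 1) := by
      rw [hXR]; ring
    have h2 : (a + 1) ^ (-s) * (s / (a + 1)) ≤ (a + 1) ^ (-s) * (((a + 1) / a) ^ s - 1) := by
      apply mul_le_mul_of_nonneg_left _ hpos.le
      linarith
    have h3 : (a + 1) ^ (-(1 + s)) = (a + 1) ^ (-s) * (a + 1)⁻¹ := by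
      rw [← Real.rpow_neg_one (a + 1), ← Real.rpow_add hb0]
      ring_nf
    rw [h1, h3]
    calc s * ((a + 1) ^ (-s) * (a + 1)⁻¹) = (a + 1) ^ (-s) * (s / (a + 1)) := by
          rw [div_eq_mul_inv]; ring
      _ ≤ _ := h2
  calc (a + 1) ^ (-(1 + s)) = (1 / s) * (s * (a + 1) ^ (-(1 + s))) := by
        field_simp
    _ ≤ (1 / s) * (a ^ (-s) - (a + 1) ^ (-s)) :=
        mul_le_mul_of_nonneg_left hdiff (by positivity)

private lemma sum_Icc_rpow {s : ℝ} (hs : 0 < s) :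
    ∀ N : ℕ, 1 ≤ N →
      ∑ v ∈ Finset.Icc 1 N, ((v:ℝ)) ^ (-(1 + s)) ≤ 1 + (1 / s) * (1 - (N:ℝ) ^ (-s)) := by
  intro N
  induction N with
  | zero => omega
  | succ N ih =>
    intro _
    rcases Nat.lt_or_ge N 1 with h | h
    · have hN : N = 0 := by omega
      subst hN
      simp [Real.one_rpow]
    · rw [Finset.sum_Icc_succ_top (by omega)]
      have hN1 : (1:ℝ) ≤ (N:ℝ) := by exact_mod_cast h
      have hkey := key_ineq hs hN1
      have hcast : ((N + 1 : ℕ) : ℝ) = (N:ℝ) + 1 := by push_cast; ring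
      rw [hcast]
      have hih := ih h
      linarith

private lemma sum_finset_rpow {s : ℝ} (hs : 0 < s) (G : Finset ℕ) (hG : ∀ v ∈ G, 1 ≤ v) :
    ∑ v ∈ G, ((v:ℝ)) ^ (-(1 + s)) ≤ 1 + 1 / s := by
  rcases G.eq_empty_or_nonempty with rfl | hne
  · simp; positivity
  · have hsub : G ⊆ Finset.Icc 1 (G.sup id) := fun v hv =>
      Finset.mem_Icc.mpr ⟨hG v hv, Finset.le_sup (f := id) hv⟩
    have hsup1 : 1 ≤ G.sup id := by
      obtain ⟨v, hv⟩ := hne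
      exact le_trans (hG v hv) (Finset.le_sup (f := id) hv)
    calc ∑ v ∈ G, ((v:ℝ)) ^ (-(1 + s))
        ≤ ∑ v ∈ Finset.Icc 1 (G.sup id), ((v:ℝ)) ^ (-(1 + s)) := by
          apply Finset.sum_le_sum_of_subset_of_nonneg hsub
          intro v _ _
          positivity
      _ ≤ 1 + (1 / s) * (1 - ((G.sup id : ℕ):ℝ) ^ (-s)) := sum_Icc_rpow hs _ hsup1
      _ ≤ 1 + 1 / s := by
          have h1 : (0:ℝ) ≤ ((G.sup id : ℕ):ℝ) ^ (-s) := by positivity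
          have h2 : (0:ℝ) < 1 / s := by positivity
          nlinarith

private lemma sum_Icc_inv_sq :
    ∀ N : ℕ, 1 ≤ N → ∑ m ∈ Finset.Icc 2 N, (1 / ((m:ℝ)) ^ 2) ≤ 1 - 1 / (N:ℝ) := by
  intro N
  induction N with
  | zero => omega
  | succ N ih =>
    intro _
    rcases Nat.lt_or_ge N 1 with h | h
    · have hN : N = 0 := by omega
      subst hN
      norm_num
    · rw [Finset.sum_Icc_succ_top (by omega)]
      have hN0 : (0:ℝ) < (N:ℝ) := by exact_mod_cast h
      have hcast : ((N + 1 : ℕ) : ℝ) = (N:ℝ) + 1 := by push_cast; ring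
      rw [hcast]
      have hstep : 1 / ((N:ℝ) + 1) ^ 2 ≤ 1 / (N:ℝ) - 1 / ((N:ℝ) + 1) := by
        rw [div_sub_div _ _ (ne_of_gt hN0) (by positivity),
          div_le_div_iff₀ (by positivity) (by positivity)]
        nlinarith
      have hih := ih h
      linarith

private lemma sum_finset_inv_sq (T : Finset ℕ) (hT : ∀ m ∈ T, 2 ≤ m) :
    ∑ m ∈ T, (1 / ((m:ℝ)) ^ 2) ≤ 1 := by
  rcases T.eq_empty_or_nonempty with rfl | hne
  · simp
  · have hsub : T ⊆ Finset.Icc 2 (T.sup id) := fun v hv =>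
      Finset.mem_Icc.mpr ⟨hT v hv, Finset.le_sup (f := id) hv⟩
    have hsup1 : 1 ≤ T.sup id := by
      obtain ⟨v, hv⟩ := hne
      exact le_trans (by omega : (1:ℕ) ≤ 2) (le_trans (hT v hv) (Finset.le_sup (f := id) hv))
    calc ∑ m ∈ T, (1 / ((m:ℝ)) ^ 2)
        ≤ ∑ m ∈ Finset.Icc 2 (T.sup id), (1 / ((m:ℝ)) ^ 2) := by
          apply Finset.sum_le_sum_of_subset_of_nonneg hsub
          intro v _ _; positivity
      _ ≤ 1 - 1 / ((T.sup id : ℕ):ℝ) := sum_Icc_inv_sq _ hsup1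
      _ ≤ 1 := by
          have h0 : (0:ℝ) < ((T.sup id : ℕ):ℝ) := by exact_mod_cast hsup1
          have h1 : (0:ℝ) ≤ 1 / ((T.sup id : ℕ):ℝ) := by positivity
          linarith

set_option maxHeartbeats 1000000 in
theorem stmt_15 : ∃ K : ℝ, ∀ n : ℕ, 2 ≤ n →
    (∀ m : ℕ, 2 ≤ m →
      ((Finset.range n).filter (fun x => x ^ m % n = 1 % n)).card
        ≤ 2 * m ^ n.primeFactors.card) →
    (∑' p : ℕ × ℕ, if 2 ≤ p.1 ∧ p.2.Prime ∧ p.2 < n ∧ p.2 ^ p.1 % n = 1 % n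
      then 1 / ((p.1 : ℝ) * (p.2 : ℝ) ^ p.1) else 0)
    ≤ K * n.primeFactors.card / n := by
  classical
  refine ⟨5, ?_⟩
  intro n hn hC
  set ω := n.primeFactors.card with hωdef
  have hω1 : 1 ≤ ω := Finset.card_pos.mpr (Nat.nonempty_primeFactors.mpr (by omega))
  have hn0 : (0:ℝ) < (n:ℝ) := by exact_mod_cast (by omega : 0 < n)
  have hω1' : (1:ℝ) ≤ (ω:ℝ) := by exact_mod_cast hω1
  have hRHS : (0:ℝ) ≤ 5 * (ω:ℝ) / (n:ℝ) := by positivity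
  apply tsum_le_of_sum_le' hRHS
  intro F
  set w := ω + 1 with hwdef
  have hw0 : (0:ℝ) < (w:ℝ) := by positivity
  set s : ℝ := 1 / (w:ℝ) with hsdef
  have hs : 0 < s := by positivity
  have hsw : 1 / s = (w:ℝ) := by rw [hsdef, one_div_one_div]
  have h1mod : 1 % n = 1 := Nat.one_mod_eq_one.mpr (by omega)
  rw [← Finset.sum_filter]
  set F' := F.filter (fun p : ℕ × ℕ => 2 ≤ p.1 ∧ p.2.Prime ∧ p.2 < n ∧ p.2 ^ p.1 % n = 1 % n)
    with hF'
  set U : ℕ × ℕ → ℕ := fun p => p.2 ^ p.1 / n with hU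
  have keyfacts : ∀ p ∈ F', 2 ≤ p.1 ∧ 2 ≤ p.2 ∧ p.2 < n ∧ p.2.Prime ∧
      p.2 ^ p.1 = n * U p + 1 ∧ 1 ≤ U p ∧ p.2 ^ p.1 % n = 1 % n := by
    intro p hp
    rw [hF', Finset.mem_filter] at hp
    obtain ⟨-, hm, hq, hqn, hmod⟩ := hp
    have hq2 : 2 ≤ p.2 := hq.two_le
    have h4 : 2 ≤ p.2 ^ p.1 := le_trans hq2 (Nat.le_self_pow (by omega) _)
    have hnle : n ≤ p.2 ^ p.1 := by
      by_contra hc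
      push_neg at hc
      have := Nat.mod_eq_of_lt hc
      omega
    have e : p.2 ^ p.1 = n * (p.2 ^ p.1 / n) + 1 := by
      conv_lhs => rw [← Nat.div_add_mod (p.2 ^ p.1) n]
      rw [hmod, h1mod]
    have hU1 : 1 ≤ U p := (Nat.one_le_div_iff (by omega)).mpr hnle
    exact ⟨hm, hq2, hqn, hq, e, hU1, hmod⟩
  have hinj : ∀ p ∈ F', ∀ p' ∈ F', U p = U p' → p = p' := by
    intro p hp p' hp' h
    obtain ⟨hm, hq2, -, hq, e, -, -⟩ := keyfacts p hp
    obtain ⟨hm', hq2', -, hq', e', -, -⟩ := keyfacts p' hp'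
    have hpow : p.2 ^ p.1 = p'.2 ^ p'.1 := by rw [e, e', h]
    have hqq : p.2 = p'.2 := by
      have h1 : p.2 ∣ p'.2 ^ p'.1 := by
        rw [← hpow]; exact dvd_pow_self _ (by omega)
      exact (Nat.prime_dvd_prime_iff_eq hq hq').mp (hq.dvd_of_dvd_pow h1)
    have hmm : p.1 = p'.1 := by
      rw [← hqq] at hpow
      exact Nat.pow_right_injective hq2 hpow
    exact Prod.ext hmm hqq
  rw [← Finset.sum_filter_add_sum_filter_not F' (fun p => U p ≤ p.1 ^ w)]
  set F₁ := F'.filter (fun p => U p ≤ p.1 ^ w) with hF₁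
  set F₂ := F'.filter (fun p => ¬ U p ≤ p.1 ^ w) with hF₂
  have hF₁sub : F₁ ⊆ F' := Finset.filter_subset _ _
  have hF₂sub : F₂ ⊆ F' := Finset.filter_subset _ _
  have hB1 : ∑ p ∈ F₁, 1 / ((p.1:ℝ) * (p.2:ℝ) ^ p.1) ≤ (1 + (w:ℝ)) / (n:ℝ) := by
    have step : ∀ p ∈ F₁, 1 / ((p.1:ℝ) * (p.2:ℝ) ^ p.1) ≤ ((U p : ℝ)) ^ (-(1 + s)) / (n:ℝ) := by
      intro p hp
      obtain ⟨hm, hq2, hqn, hq, e, hU1, -⟩ := keyfacts p (hF₁sub hp)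
      have hUle : U p ≤ p.1 ^ w := by
        rw [hF₁, Finset.mem_filter] at hp
        exact hp.2
      have hu0 : (0:ℝ) < (U p : ℝ) := by exact_mod_cast hU1
      have hm0 : (0:ℝ) < (p.1:ℝ) := by exact_mod_cast (by omega : 0 < p.1)
      have hqm : (n:ℝ) * (U p : ℝ) + 1 = (p.2:ℝ) ^ p.1 := by
        have h5 : ((p.2 ^ p.1 : ℕ) : ℝ) = ((n * U p + 1 : ℕ) : ℝ) := by exact_mod_cast e
        push_cast at h5
        linarith
      have hq_ge : (n:ℝ) * (U p : ℝ) ≤ (p.2:ℝ) ^ p.1 := by linarith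
      have hus : (U p : ℝ) ^ s ≤ (p.1:ℝ) := by
        have h1 : (U p : ℝ) ≤ ((p.1:ℝ)) ^ (w:ℕ) := by exact_mod_cast hUle
        have h2 : (U p : ℝ) ^ s ≤ (((p.1:ℝ)) ^ (w:ℕ)) ^ s :=
          Real.rpow_le_rpow hu0.le h1 hs.le
        rw [← Real.rpow_natCast (p.1:ℝ) w, ← Real.rpow_mul hm0.le] at h2
        have h3 : (w:ℝ) * s = 1 := by
          rw [hsdef]
          field_simp
        rw [h3, Real.rpow_one] at h2
        exact h2
      have hmu : 1 / ((p.1:ℝ) * (U p : ℝ)) ≤ ((U p : ℝ)) ^ (-(1 + s)) := by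
        have hup : (U p : ℝ) ^ (-(1 + s)) = ((U p : ℝ) * (U p : ℝ) ^ s)⁻¹ := by
          rw [Real.rpow_neg hu0.le, Real.rpow_add hu0, Real.rpow_one]
        rw [hup, one_div]
        apply inv_anti₀ (by positivity)
        calc (U p : ℝ) * (U p : ℝ) ^ s ≤ (U p : ℝ) * (p.1:ℝ) :=
              mul_le_mul_of_nonneg_left hus hu0.le
          _ = (p.1:ℝ) * (U p : ℝ) := by ring
      calc 1 / ((p.1:ℝ) * (p.2:ℝ) ^ p.1)
          ≤ 1 / ((p.1:ℝ) * ((n:ℝ) * (U p : ℝ))) := by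
            apply one_div_le_one_div_of_le (by positivity)
            exact mul_le_mul_of_nonneg_left hq_ge hm0.le
        _ = (1 / ((p.1:ℝ) * (U p : ℝ))) / (n:ℝ) := by
            field_simp
        _ ≤ ((U p : ℝ)) ^ (-(1 + s)) / (n:ℝ) := by gcongr
    calc ∑ p ∈ F₁, 1 / ((p.1:ℝ) * (p.2:ℝ) ^ p.1)
        ≤ ∑ p ∈ F₁, ((U p : ℝ)) ^ (-(1 + s)) / (n:ℝ) := Finset.sum_le_sum step
      _ = (∑ p ∈ F₁, ((U p : ℝ)) ^ (-(1 + s))) / (n:ℝ) := by rw [Finset.sum_div]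
      _ = (∑ v ∈ F₁.image U, ((v:ℝ)) ^ (-(1 + s))) / (n:ℝ) := by
          rw [Finset.sum_image (fun p hp p' hp' h => hinj p (hF₁sub hp) p' (hF₁sub hp') h)]
      _ ≤ (1 + 1 / s) / (n:ℝ) := by
          gcongr
          apply sum_finset_rpow hs
          intro v hv
          obtain ⟨p, hp, rfl⟩ := Finset.mem_image.mp hv
          exact (keyfacts p (hF₁sub hp)).2.2.2.2.2.1
      _ = (1 + (w:ℝ)) / (n:ℝ) := by rw [hsw]
  have hB2 : ∑ p ∈ F₂, 1 / ((p.1:ℝ) * (p.2:ℝ) ^ p.1) ≤ 2 / (n:ℝ) := by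
    have step : ∀ p ∈ F₂, 1 / ((p.1:ℝ) * (p.2:ℝ) ^ p.1)
        ≤ (fun m : ℕ => (1 / ((m:ℝ)) ^ (w + 1)) / (n:ℝ)) p.1 := by
      intro p hp
      obtain ⟨hm, hq2, hqn, hq, e, hU1, -⟩ := keyfacts p (hF₂sub hp)
      have hUgt : p.1 ^ w < U p := by
        rw [hF₂, Finset.mem_filter] at hp
        omega
      have hm0 : (0:ℝ) < (p.1:ℝ) := by exact_mod_cast (by omega : 0 < p.1)
      have hqm : (n:ℝ) * (U p : ℝ) + 1 = (p.2:ℝ) ^ p.1 := by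
        have h5 : ((p.2 ^ p.1 : ℕ) : ℝ) = ((n * U p + 1 : ℕ) : ℝ) := by exact_mod_cast e
        push_cast at h5
        linarith
      have hUw : ((p.1:ℝ)) ^ w ≤ (U p : ℝ) := by
        exact_mod_cast hUgt.le
      have hkey : ((p.1:ℝ)) ^ (w + 1) * (n:ℝ) ≤ (p.1:ℝ) * (p.2:ℝ) ^ p.1 := by
        have h6 : ((p.1:ℝ)) ^ w * (n:ℝ) ≤ (U p : ℝ) * (n:ℝ) :=
          mul_le_mul_of_nonneg_right hUw hn0.le
        have h7 : (n:ℝ) * (U p : ℝ) ≤ (p.2:ℝ) ^ p.1 := by linarith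
        calc ((p.1:ℝ)) ^ (w + 1) * (n:ℝ) = (p.1:ℝ) * (((p.1:ℝ)) ^ w * (n:ℝ)) := by ring
          _ ≤ (p.1:ℝ) * ((U p : ℝ) * (n:ℝ)) := by
              exact mul_le_mul_of_nonneg_left h6 hm0.le
          _ ≤ (p.1:ℝ) * ((p.2:ℝ) ^ p.1) := by
              apply mul_le_mul_of_nonneg_left _ hm0.le
              linarith
      simp only []
      rw [div_div, one_div, one_div]
      apply inv_anti₀ (by positivity)
      linarith
    calc ∑ p ∈ F₂, 1 / ((p.1:ℝ) * (p.2:ℝ) ^ p.1)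
        ≤ ∑ p ∈ F₂, (fun m : ℕ => (1 / ((m:ℝ)) ^ (w + 1)) / (n:ℝ)) p.1 :=
          Finset.sum_le_sum step
      _ = ∑ m ∈ F₂.image Prod.fst,
            (F₂.filter (fun p => p.1 = m)).card •
              ((fun m : ℕ => (1 / ((m:ℝ)) ^ (w + 1)) / (n:ℝ)) m) :=
        by exact Finset.sum_comp (fun m : ℕ => (1 / ((m:ℝ)) ^ (w + 1)) / (n:ℝ)) Prod.fst
      _ = ∑ m ∈ F₂.image Prod.fst,
            (F₂.filter (fun p => p.1 = m)).card • ((1 / ((m:ℝ)) ^ (w + 1)) / (n:ℝ)) := rfl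
      _ ≤ ∑ m ∈ F₂.image Prod.fst, (2 * ((m:ℝ)) ^ ω) * ((1 / ((m:ℝ)) ^ (w + 1)) / (n:ℝ)) := by
          apply Finset.sum_le_sum
          intro m hm
          rw [nsmul_eq_mul]
          apply mul_le_mul_of_nonneg_right _ (by positivity)
          obtain ⟨p₀, hp₀, rfl⟩ := Finset.mem_image.mp hm
          have hm2 : 2 ≤ p₀.1 := (keyfacts p₀ (hF₂sub hp₀)).1
          have hcard : (F₂.filter (fun p => p.1 = p₀.1)).card ≤ 2 * p₀.1 ^ ω := by
            refine le_trans (Finset.card_le_card_of_injOn (fun p => p.2) ?_ ?_) (hC p₀.1 hm2)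
            · intro p hp
              rw [Finset.mem_coe, Finset.mem_filter] at hp
              obtain ⟨hpF₂, hpm⟩ := hp
              obtain ⟨-, -, hqn, -, -, -, hmod⟩ := keyfacts p (hF₂sub hpF₂)
              rw [Finset.mem_coe, Finset.mem_filter, Finset.mem_range]
              refine ⟨hqn, ?_⟩
              rw [← hpm]
              exact hmod
            · intro p hp p' hp' hqq
              rw [Finset.mem_coe, Finset.mem_filter] at hp hp'
              exact Prod.ext (hp.2.trans hp'.2.symm) hqq
          exact_mod_cast hcard
      _ = ∑ m ∈ F₂.image Prod.fst, (2 * (1 / ((m:ℝ)) ^ 2)) / (n:ℝ) := by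
          apply Finset.sum_congr rfl
          intro m hm
          obtain ⟨p₀, hp₀, rfl⟩ := Finset.mem_image.mp hm
          have hm2 : 2 ≤ p₀.1 := (keyfacts p₀ (hF₂sub hp₀)).1
          have hm0 : ((p₀.1:ℝ)) ≠ 0 := by
            exact_mod_cast (by omega : p₀.1 ≠ 0)
          have hpow : ((p₀.1:ℝ)) ^ (w + 1) = ((p₀.1:ℝ)) ^ ω * ((p₀.1:ℝ)) ^ 2 := by
            rw [show w + 1 = ω + 2 by omega, pow_add]
          rw [hpow]
          field_simp
          try ring
      _ = (∑ m ∈ F₂.image Prod.fst, (1 / ((m:ℝ)) ^ 2)) * (2 / (n:ℝ)) := by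
          rw [Finset.sum_mul]
          apply Finset.sum_congr rfl
          intro m hm
          ring
      _ ≤ 1 * (2 / (n:ℝ)) := by
          apply mul_le_mul_of_nonneg_right _ (by positivity)
          apply sum_finset_inv_sq
          intro m hm
          obtain ⟨p₀, hp₀, rfl⟩ := Finset.mem_image.mp hm
          exact (keyfacts p₀ (hF₂sub hp₀)).1
      _ = 2 / (n:ℝ) := by ring
  have hfinal : (1 + (w:ℝ)) / (n:ℝ) + 2 / (n:ℝ) ≤ 5 * (ω:ℝ) / (n:ℝ) := by
    have hnum : (1 + (w:ℝ)) + 2 ≤ 5 * (ω:ℝ) := by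
      have hwcast : (w:ℝ) = (ω:ℝ) + 1 := by rw [hwdef]; push_cast; ring
      rw [hwcast]
      linarith
    calc (1 + (w:ℝ)) / (n:ℝ) + 2 / (n:ℝ) = ((1 + (w:ℝ)) + 2) / (n:ℝ) := by rw [← add_div]
      _ ≤ (5 * (ω:ℝ)) / (n:ℝ) := by gcongr
  linarith [hB1, hB2, hfinal]
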